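/- Assume λ₂ > 0 and X_i ≠ 0 for every column i. If β* ∈ ℝ^p is a global minimizer of F (i.e., F(β*) ≤ F(β) for all β ∈ ℝ^p), then for every i with β*_i ≠ 0 one has |β*_i| > (q λ₁ / ‖X_i‖_r)^{1/(1−q)}. -/

import Mathlib

/-- Index for the ℓ_r norm with r ∈ {1, 2, ∞}. -/
inductive LrIndex : Type
  | one | two | inf

/-- The ℓ_r norm on ℝ^n for r ∈ {1, 2, ∞}. -/
noncomputable def lrNorm {n : ℕ} (r : LrIndex) (z : Fin n → ℝ) : ℝ :=
  match r with
  | .one => ∑ j, |z j|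
  | .two => Real.sqrt (∑ j, (z j) ^ 2)
  | .inf => ⨆ j, |z j|

/-- `v` is a subgradient of `z ↦ ‖z − y‖_r` at `z₀`. -/
def IsSubgradAt {n : ℕ} (r : LrIndex) (y v z₀ : Fin n → ℝ) : Prop :=
  ∀ z : Fin n → ℝ,
    lrNorm r (z₀ - y) + ∑ j, v j * (z j - z₀ j) ≤ lrNorm r (z - y)

/-- The objective F(β) = ‖Xβ − y‖_r + λ₂‖β‖₂² + λ₁ Σᵢ |βᵢ|^q. -/
noncomputable def objF {n p : ℕ} (r : LrIndex) (X : Matrix (Fin n) (Fin p) ℝ)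
    (y : Fin n → ℝ) (lam1 lam2 q : ℝ) (β : Fin p → ℝ) : ℝ :=
  lrNorm r (X.mulVec β - y) + lam2 * ∑ i, (β i) ^ 2 + lam1 * ∑ i, |β i| ^ q

/-- `β` is a generalized first-order stationary point of F. -/
def IsGenStat {n p : ℕ} (r : LrIndex) (X : Matrix (Fin n) (Fin p) ℝ)
    (y : Fin n → ℝ) (lam1 lam2 q : ℝ) (β : Fin p → ℝ) : Prop :=
  ∃ v : Fin n → ℝ, IsSubgradAt r y v (X.mulVec β) ∧
    ∀ i : Fin p,
      β i * (∑ j, X j i * v j) + 2 * lam2 * (β i) ^ 2 + lam1 * q * |β i| ^ q = 0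


open Finset

lemma lrNorm_pos {n : ℕ} (hn : 0 < n) (r : LrIndex) (w : Fin n → ℝ) (hw : w ≠ 0) :
    0 < lrNorm r w := by
  obtain ⟨j, hj⟩ : ∃ j, w j ≠ 0 := by
    by_contra h; push_neg at h; exact hw (funext h)
  have hj' : 0 < |w j| := abs_pos.mpr hj
  cases r with
  | one =>
    show (0:ℝ) < ∑ k, |w k|
    exact lt_of_lt_of_le hj' (Finset.single_le_sum (fun k _ => abs_nonneg (w k)) (mem_univ j))
  | two =>
    show (0:ℝ) < Real.sqrt (∑ k, (w k) ^ 2)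
    apply Real.sqrt_pos.mpr
    exact Finset.sum_pos' (fun k _ => sq_nonneg _) ⟨j, mem_univ j, by positivity⟩
  | inf =>
    show (0:ℝ) < ⨆ k, |w k|
    exact lt_of_lt_of_le hj' (le_ciSup (f := fun k => |w k|) (Set.Finite.bddAbove (Set.finite_range _)) j)

lemma lrNorm_add_le {n : ℕ} (hn : 0 < n) (r : LrIndex) (a b : Fin n → ℝ) :
    lrNorm r (a + b) ≤ lrNorm r a + lrNorm r b := by
  have : Nonempty (Fin n) := ⟨⟨0, hn⟩⟩
  cases r with
  | one =>
    show ∑ j, |(a + b) j| ≤ (∑ j, |a j|) + ∑ j, |b j|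
    rw [← Finset.sum_add_distrib]
    exact Finset.sum_le_sum fun j _ => abs_add_le _ _
  | two =>
    have ha : lrNorm LrIndex.two a = ‖(WithLp.equiv 2 (Fin n → ℝ)).symm a‖ := by
      rw [EuclideanSpace.norm_eq]; simp [lrNorm, sq_abs]
    have hb : lrNorm LrIndex.two b = ‖(WithLp.equiv 2 (Fin n → ℝ)).symm b‖ := by
      rw [EuclideanSpace.norm_eq]; simp [lrNorm, sq_abs]
    have hab : lrNorm LrIndex.two (a + b) = ‖(WithLp.equiv 2 (Fin n → ℝ)).symm a + (WithLp.equiv 2 (Fin n → ℝ)).symm b‖ := by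
      rw [EuclideanSpace.norm_eq]; simp [lrNorm, sq_abs]
    rw [ha, hb, hab]; exact norm_add_le _ _
  | inf =>
    show (⨆ j, |(a + b) j|) ≤ (⨆ j, |a j|) + ⨆ j, |b j|
    apply ciSup_le
    intro j
    refine le_trans (abs_add_le _ _) (add_le_add ?_ ?_)
    · exact le_ciSup (f := fun k => |a k|) (Set.Finite.bddAbove (Set.finite_range _)) j
    · exact le_ciSup (f := fun k => |b k|) (Set.Finite.bddAbove (Set.finite_range _)) j

lemma lrNorm_smul_le {n : ℕ} (hn : 0 < n) (r : LrIndex) (t : ℝ) (w : Fin n → ℝ) :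
    lrNorm r (fun j => t * w j) ≤ |t| * lrNorm r w := by
  have : Nonempty (Fin n) := ⟨⟨0, hn⟩⟩
  cases r with
  | one =>
    show ∑ j, |t * w j| ≤ |t| * ∑ j, |w j|
    simp [abs_mul, Finset.mul_sum]
  | two =>
    show Real.sqrt (∑ j, (t * w j) ^ 2) ≤ |t| * Real.sqrt (∑ j, (w j) ^ 2)
    have h : ∀ j : Fin n, (t * w j) ^ 2 = t ^ 2 * (w j) ^ 2 := fun j => by ring
    simp only [h, ← Finset.mul_sum]
    rw [Real.sqrt_mul (sq_nonneg t), Real.sqrt_sq_eq_abs]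
  | inf =>
    show (⨆ j, |t * w j|) ≤ |t| * ⨆ j, |w j|
    apply ciSup_le
    intro j
    rw [abs_mul]
    exact mul_le_mul_of_nonneg_left (le_ciSup (f := fun k => |w k|) (Set.Finite.bddAbove (Set.finite_range _)) j) (abs_nonneg t)

/-- lower bound for the nonzero entries of a global minimizer of F. -/
theorem global_min_lower_bound {n p : ℕ} (hn : 0 < n) (hp : 0 < p)
    (r : LrIndex) (X : Matrix (Fin n) (Fin p) ℝ) (y : Fin n → ℝ)
    (lam1 lam2 q : ℝ) (hlam1 : 0 < lam1) (hlam2 : 0 < lam2)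
    (hq0 : 0 < q) (hq1 : q < 1)
    (hX : ∀ i : Fin p, (fun j => X j i) ≠ (0 : Fin n → ℝ))
    (βs : Fin p → ℝ)
    (hmin : ∀ β : Fin p → ℝ, objF r X y lam1 lam2 q βs ≤ objF r X y lam1 lam2 q β) :
    ∀ i : Fin p, βs i ≠ 0 →
      (q * lam1 / lrNorm r (fun j => X j i)) ^ (1 / (1 - q)) < |βs i| := by
  intro i hβi
  set c : ℝ := lrNorm r (fun j => X j i) with hc_def
  have hc : 0 < c := lrNorm_pos hn r _ (hX i)
  set t : ℝ := |βs i| with ht_def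
  have ht : 0 < t := abs_pos.mpr hβi
  set β0 : Fin p → ℝ := Function.update βs i 0 with hβ0
  -- mulVec identity
  have hmv : X.mulVec β0 - y =
      (X.mulVec βs - y) + (fun j => (-(βs i)) * X j i) := by
    funext j
    have h1 : ∀ k : Fin p, X j k * β0 k
        = X j k * βs k - (if k = i then X j i * βs i else 0) := by
      intro k
      by_cases h : k = i <;> simp [hβ0, Function.update_apply, h]
    simp only [Pi.sub_apply, Pi.add_apply, Matrix.mulVec, dotProduct, h1,
      Finset.sum_sub_distrib, Finset.sum_ite_eq', Finset.mem_univ, if_true]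
    ring
  -- sum of squares
  have hsq : ∑ k, (β0 k) ^ 2 = (∑ k, (βs k) ^ 2) - (βs i) ^ 2 := by
    have h1 : ∀ k : Fin p, (β0 k) ^ 2
        = (βs k) ^ 2 - (if k = i then (βs i) ^ 2 else 0) := by
      intro k
      by_cases h : k = i <;> simp [hβ0, Function.update_apply, h]
    simp only [h1, Finset.sum_sub_distrib, Finset.sum_ite_eq', Finset.mem_univ, if_true]
  -- sum of q-powers
  have hqs : ∑ k, |β0 k| ^ q = (∑ k, |βs k| ^ q) - t ^ q := by
    have h1 : ∀ k : Fin p, |β0 k| ^ q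
        = |βs k| ^ q - (if k = i then |βs i| ^ q else 0) := by
      intro k
      by_cases h : k = i <;>
        simp [hβ0, Function.update_apply, h, Real.zero_rpow (ne_of_gt hq0)]
    simp only [h1, Finset.sum_sub_distrib, Finset.sum_ite_eq', Finset.mem_univ, if_true,
      ← ht_def]
  -- the norm bound
  have hnorm : lrNorm r (X.mulVec β0 - y) ≤ lrNorm r (X.mulVec βs - y) + t * c := by
    rw [hmv]
    refine le_trans (lrNorm_add_le hn r _ _) (add_le_add (le_refl _) ?_)
    calc lrNorm r (fun j => (-(βs i)) * X j i)
        ≤ |(-(βs i))| * c := lrNorm_smul_le hn r _ _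
      _ = t * c := by rw [abs_neg]
  -- key inequality
  have key : lam2 * (βs i) ^ 2 + lam1 * t ^ q ≤ t * c := by
    have h := hmin β0
    simp only [objF, hsq, hqs] at h
    have h' : lrNorm r (X.mulVec βs - y) + lam2 * (βs i) ^ 2 + lam1 * t ^ q
        ≤ lrNorm r (X.mulVec β0 - y) := by linarith [h]
    linarith [hnorm, h']
  have hsqpos : 0 < lam2 * (βs i) ^ 2 := by positivity
  have htq : 0 < t ^ q := Real.rpow_pos_of_pos ht q
  have key2 : q * lam1 * t ^ q < t * c := by
    have : q * lam1 * t ^ q < lam1 * t ^ q := by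
      apply mul_lt_mul_of_pos_right _ htq
      nlinarith
    linarith
  have h1q : 0 < 1 - q := by linarith
  have hstep : q * lam1 / c < t ^ (1 - q) := by
    rw [Real.rpow_sub ht, Real.rpow_one, div_lt_div_iff₀ hc htq]
    linarith [key2]
  calc (q * lam1 / c) ^ (1 / (1 - q))
      < (t ^ (1 - q)) ^ (1 / (1 - q)) := by
        apply Real.rpow_lt_rpow (by positivity) hstep (by positivity)
    _ = t := by
        rw [← Real.rpow_mul (le_of_lt ht), mul_one_div_cancel (ne_of_gt h1q), Real.rpow_one]
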